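/- arXiv:1403.1638 — 3 statements merged into one kernel-verified Lean document; each statement's English description precedes it below -/
import Mathlib

section
/- For vectors b(x_i) = (M_p^{-1} p(x_i) - M_1^{-1}) f(x_i) indexed over a finite set, the sum of b(x_i) b(x_i)' is positive semidefinite, and hence M_p^{-1} M_{p^2} M_p^{-1} - M_1^{-1} is positive semidefinite. -/
open Matrix Finset

set_option maxHeartbeats 1000000

lemma key' {n : ℕ} (A B : Matrix (Fin n) (Fin n) ℝ) (v : Fin n → ℝ) :
    Matrix.vecMulVec (A *ᵥ v) (B *ᵥ v) = A * Matrix.vecMulVec v v * Bᵀ := by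
  rw [Matrix.vecMulVec_eq (Fin 1), Matrix.vecMulVec_eq (Fin 1), Matrix.replicateCol_mulVec,
    Matrix.replicateRow_mulVec, Matrix.transpose_mul, Matrix.transpose_replicateCol]
  simp only [Matrix.mul_assoc]

lemma vmv_symm' {n : ℕ} (v : Fin n → ℝ) :
    (Matrix.vecMulVec v v)ᵀ = Matrix.vecMulVec v v := by
  ext i j; simp [Matrix.vecMulVec_apply, mul_comm]

lemma psd_vmv' {n : ℕ} (v : Fin n → ℝ) : (Matrix.vecMulVec v v).PosSemidef := by
  rw [posSemidef_iff_dotProduct_mulVec]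
  constructor
  · ext i j; simp [Matrix.vecMulVec_apply, mul_comm]
  · intro x
    have h : Matrix.vecMulVec v v *ᵥ x = (v ⬝ᵥ x) • v := by
      ext i
      simp only [Matrix.mulVec, dotProduct, Matrix.vecMulVec_apply, Pi.smul_apply,
        smul_eq_mul, Finset.sum_mul]
      exact Finset.sum_congr rfl fun j _ => by ring
    rw [h]
    simp only [dotProduct_smul, smul_eq_mul, star_trivial, dotProduct_comm x v]
    exact mul_self_nonneg _


/-- For b(x_i) = (M_p⁻¹ p(x_i) − M_1⁻¹) f(x_i), the sum Σ b(x_i) b(x_i)'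
is positive semidefinite, and hence M_p⁻¹ M_{p²} M_p⁻¹ − M_1⁻¹ is positive semidefinite. -/
theorem stmt0 {N q : ℕ} (f : Fin N → Fin q → ℝ) (w : Fin N → ℝ)
    (Mp Mp2 M1 : Matrix (Fin q) (Fin q) ℝ)
    (hMp : Mp = ∑ i, w i • vecMulVec (f i) (f i))
    (hMp2 : Mp2 = ∑ i, (w i) ^ 2 • vecMulVec (f i) (f i))
    (hM1 : M1 = ∑ i, vecMulVec (f i) (f i))
    (hMpinv : IsUnit Mp.det) (hM1inv : IsUnit M1.det) :
    (∑ i, vecMulVec ((w i • Mp⁻¹ - M1⁻¹).mulVec (f i))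
        ((w i • Mp⁻¹ - M1⁻¹).mulVec (f i))).PosSemidef
      ∧ (Mp⁻¹ * Mp2 * Mp⁻¹ - M1⁻¹).PosSemidef := by
  set P := Mp⁻¹ with hP
  set Q := M1⁻¹ with hQ
  have hMpT : Mpᵀ = Mp := by
    rw [hMp]; simp [transpose_sum, transpose_smul, vmv_symm']
  have hM1T : M1ᵀ = M1 := by
    rw [hM1]; simp [transpose_sum, vmv_symm']
  have hST : ∀ i : Fin N, (w i • P - Q)ᵀ = w i • P - Q := by
    intro i
    rw [transpose_sub, transpose_smul, hP, hQ, transpose_nonsing_inv,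
      transpose_nonsing_inv, hMpT, hM1T]
  have hpsd1 : (∑ i, vecMulVec ((w i • P - Q) *ᵥ (f i)) ((w i • P - Q) *ᵥ (f i))).PosSemidef := by
    apply Finset.sum_induction _ Matrix.PosSemidef
      (fun a b ha hb => ha.add hb) Matrix.PosSemidef.zero
    exact fun i _ => psd_vmv' _
  refine ⟨hpsd1, ?_⟩
  have hsum : (∑ i, vecMulVec ((w i • P - Q) *ᵥ (f i)) ((w i • P - Q) *ᵥ (f i)))
      = P * Mp2 * P - Q := by
    have h1 : ∀ i : Fin N, vecMulVec ((w i • P - Q) *ᵥ (f i)) ((w i • P - Q) *ᵥ (f i))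
        = (w i) ^ 2 • (P * vecMulVec (f i) (f i) * P)
          - w i • (P * vecMulVec (f i) (f i) * Q)
          - w i • (Q * vecMulVec (f i) (f i) * P)
          + Q * vecMulVec (f i) (f i) * Q := by
      intro i
      rw [key', hST]
      simp only [sub_mul, mul_sub, smul_mul_assoc, mul_smul_comm, smul_smul, sq]
      module
    simp only [h1, Finset.sum_add_distrib, Finset.sum_sub_distrib]
    have e1 : (∑ i, (w i) ^ 2 • (P * vecMulVec (f i) (f i) * P)) = P * Mp2 * P := by
      rw [hMp2, Finset.mul_sum, Finset.sum_mul]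
      simp [mul_smul_comm, smul_mul_assoc]
    have e2 : (∑ i, w i • (P * vecMulVec (f i) (f i) * Q)) = Q := by
      have : (∑ i, w i • (P * vecMulVec (f i) (f i) * Q)) = P * Mp * Q := by
        rw [hMp, Finset.mul_sum, Finset.sum_mul]
        simp [mul_smul_comm, smul_mul_assoc]
      rw [this, hP, Matrix.nonsing_inv_mul Mp hMpinv, Matrix.one_mul]
    have e3 : (∑ i, w i • (Q * vecMulVec (f i) (f i) * P)) = Q := by
      have : (∑ i, w i • (Q * vecMulVec (f i) (f i) * P)) = Q * Mp * P := by
        rw [hMp, Finset.mul_sum, Finset.sum_mul]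
        simp [mul_smul_comm, smul_mul_assoc]
      rw [this, hP, Matrix.mul_assoc, Matrix.mul_nonsing_inv Mp hMpinv, Matrix.mul_one]
    have e4 : (∑ i, Q * vecMulVec (f i) (f i) * Q) = Q := by
      have : (∑ i, Q * vecMulVec (f i) (f i) * Q) = Q * M1 * Q := by
        rw [hM1, Finset.mul_sum, Finset.sum_mul]
      rw [this, hQ, Matrix.nonsing_inv_mul M1 hM1inv, Matrix.one_mul]
    rw [e1, e2, e3, e4]
    abel
  rw [← hsum]
  exact hpsd1
end

section
/- If M_p and M_1 are invertible, then M_p^{-1} M_{p^2} M_p^{-1} ⪰ M_1^{-1}, i.e., the matrix M_p^{-1} M_{p^2} M_p^{-1} - M_1^{-1} is positive semidefinite. -/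
open Matrix Finset

lemma quad_vecMulVec {q : ℕ} (a b c : Fin q → ℝ) :
    a ⬝ᵥ (vecMulVec c c) *ᵥ b = (c ⬝ᵥ a) * (c ⬝ᵥ b) := by
  simp [vecMulVec, mulVec, dotProduct, Finset.mul_sum, Finset.sum_mul]
  rw [Finset.sum_comm]
  congr 1; ext i; congr 1; ext j; ring

lemma sum_mulVec' {N q : ℕ} (A : Fin N → Matrix (Fin q) (Fin q) ℝ) (v : Fin q → ℝ) :
    (∑ i, A i) *ᵥ v = ∑ i, A i *ᵥ v := by
  ext j
  simp only [mulVec, dotProduct, Matrix.sum_apply, Finset.sum_apply, Finset.sum_mul]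
  rw [Finset.sum_comm]

lemma quad_sum {N q : ℕ} (f : Fin N → Fin q → ℝ) (c : Fin N → ℝ) (a b : Fin q → ℝ) :
    a ⬝ᵥ (∑ i, c i • vecMulVec (f i) (f i)) *ᵥ b = ∑ i, c i * ((f i ⬝ᵥ a) * (f i ⬝ᵥ b)) := by
  rw [sum_mulVec']
  have hds : ∀ (g : Fin N → Fin q → ℝ), a ⬝ᵥ (∑ i, g i) = ∑ i, a ⬝ᵥ g i := by
    intro g
    simp only [dotProduct, Finset.sum_apply, Finset.mul_sum]
    rw [Finset.sum_comm]
  rw [hds]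
  congr 1; ext i
  rw [Matrix.smul_mulVec, dotProduct_smul, quad_vecMulVec]
  simp [mul_assoc]

lemma vecMulVec_symm {q : ℕ} (c : Fin q → ℝ) : (vecMulVec c c)ᵀ = vecMulVec c c := by
  ext i j; simp [vecMulVec_apply, mul_comm]

/-- If M_p and M_1 are invertible, then M_p⁻¹ M_{p²} M_p⁻¹ ⪰ M_1⁻¹. -/
theorem stmt1 {N q : ℕ} (f : Fin N → Fin q → ℝ) (w : Fin N → ℝ)
    (Mp Mp2 M1 : Matrix (Fin q) (Fin q) ℝ)
    (hMp : Mp = ∑ i, w i • vecMulVec (f i) (f i))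
    (hMp2 : Mp2 = ∑ i, (w i) ^ 2 • vecMulVec (f i) (f i))
    (hM1 : M1 = ∑ i, vecMulVec (f i) (f i))
    (hMpinv : IsUnit Mp.det) (hM1inv : IsUnit M1.det) :
    (Mp⁻¹ * Mp2 * Mp⁻¹ - M1⁻¹).PosSemidef := by
  have hMpT : Mpᵀ = Mp := by
    rw [hMp, Matrix.transpose_sum]
    exact Finset.sum_congr rfl fun i _ => by rw [Matrix.transpose_smul, vecMulVec_symm]
  have hMp2T : Mp2ᵀ = Mp2 := by
    rw [hMp2, Matrix.transpose_sum]
    exact Finset.sum_congr rfl fun i _ => by rw [Matrix.transpose_smul, vecMulVec_symm]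
  have hM1T : M1ᵀ = M1 := by
    rw [hM1, Matrix.transpose_sum]
    exact Finset.sum_congr rfl fun i _ => vecMulVec_symm _
  have hMpiT : Mp⁻¹ᵀ = Mp⁻¹ := by rw [Matrix.transpose_nonsing_inv, hMpT]
  have hM1iT : M1⁻¹ᵀ = M1⁻¹ := by rw [Matrix.transpose_nonsing_inv, hM1T]
  have hT : (Mp⁻¹ * Mp2 * Mp⁻¹ - M1⁻¹)ᵀ = Mp⁻¹ * Mp2 * Mp⁻¹ - M1⁻¹ := by
    rw [Matrix.transpose_sub, Matrix.transpose_mul, Matrix.transpose_mul,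
      hMpiT, hMp2T, hM1iT, mul_assoc]
  refine Matrix.posSemidef_iff_dotProduct_mulVec.mpr ⟨?_, ?_⟩
  · show (Mp⁻¹ * Mp2 * Mp⁻¹ - M1⁻¹)ᴴ = _
    ext i j
    have := congrFun (congrFun hT i) j
    simp only [Matrix.transpose_apply] at this
    simpa [Matrix.conjTranspose_apply] using this
  · intro x
    have star_x : star x = x := by ext i; simp
    set a := Mp⁻¹ *ᵥ x with ha
    set b := M1⁻¹ *ᵥ x with hb
    have hmain : x ⬝ᵥ (Mp⁻¹ * Mp2 * Mp⁻¹) *ᵥ x = ∑ i, (w i)^2 * ((f i ⬝ᵥ a) * (f i ⬝ᵥ a)) := by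
      rw [← Matrix.mulVec_mulVec, ← Matrix.mulVec_mulVec, Matrix.dotProduct_mulVec]
      nth_rewrite 1 [← hMpiT]
      rw [Matrix.vecMul_transpose, ← ha, hMp2]
      exact quad_sum f (fun i => (w i)^2) a a
    have hS : x ⬝ᵥ M1⁻¹ *ᵥ x = ∑ i, (f i ⬝ᵥ b) * (f i ⬝ᵥ b) := by
      have h1 : M1⁻¹ = M1⁻¹ * M1 * M1⁻¹ := by
        rw [Matrix.nonsing_inv_mul _ hM1inv, one_mul]
      calc x ⬝ᵥ M1⁻¹ *ᵥ x = x ⬝ᵥ (M1⁻¹ * M1 * M1⁻¹) *ᵥ x := by rw [← h1]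
        _ = b ⬝ᵥ M1 *ᵥ b := by
            rw [← Matrix.mulVec_mulVec, ← Matrix.mulVec_mulVec, Matrix.dotProduct_mulVec]
            nth_rewrite 1 [← hM1iT]
            rw [Matrix.vecMul_transpose, ← hb]
        _ = ∑ i, (f i ⬝ᵥ b) * (f i ⬝ᵥ b) := by
            have := quad_sum f (fun _ => (1:ℝ)) b b
            simp only [one_smul, one_mul] at this
            rw [hM1, this]
    have hC : ∑ i, w i * ((f i ⬝ᵥ a) * (f i ⬝ᵥ b)) = x ⬝ᵥ M1⁻¹ *ᵥ x := by
      have h2 : a ⬝ᵥ Mp *ᵥ b = ∑ i, w i * ((f i ⬝ᵥ a) * (f i ⬝ᵥ b)) := by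
        rw [hMp]; exact quad_sum f w a b
      rw [← h2, Matrix.dotProduct_mulVec, ha, ← Matrix.vecMul_transpose, hMpiT,
        Matrix.vecMul_vecMul, Matrix.nonsing_inv_mul _ hMpinv, Matrix.vecMul_one]
    have hcs := Finset.sum_mul_sq_le_sq_mul_sq Finset.univ
      (fun i => w i * (f i ⬝ᵥ a)) (fun i => f i ⬝ᵥ b)
    have hSnn : 0 ≤ x ⬝ᵥ M1⁻¹ *ᵥ x := by
      rw [hS]; exact Finset.sum_nonneg fun i _ => mul_self_nonneg _
    have hTnn : 0 ≤ ∑ i, (w i)^2 * ((f i ⬝ᵥ a) * (f i ⬝ᵥ a)) := by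
      refine Finset.sum_nonneg fun i _ => ?_
      have h3 : (w i)^2 * ((f i ⬝ᵥ a) * (f i ⬝ᵥ a)) = (w i * (f i ⬝ᵥ a))^2 := by ring
      rw [h3]; exact sq_nonneg _
    have key : x ⬝ᵥ M1⁻¹ *ᵥ x ≤ x ⬝ᵥ (Mp⁻¹ * Mp2 * Mp⁻¹) *ᵥ x := by
      rw [hmain]
      have hC' : (∑ i, w i * (f i ⬝ᵥ a) * (f i ⬝ᵥ b)) = x ⬝ᵥ M1⁻¹ *ᵥ x := by
        rw [← hC]; congr 1; ext i; ring
      have hsq : (∑ i, (w i * (f i ⬝ᵥ a))^2) = ∑ i, (w i)^2 * ((f i ⬝ᵥ a) * (f i ⬝ᵥ a)) := by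
        congr 1; ext i; ring
      have hsq2 : (∑ i, (f i ⬝ᵥ b)^2) = ∑ i, (f i ⬝ᵥ b) * (f i ⬝ᵥ b) := by
        congr 1; ext i; ring
      rw [hC', hsq, hsq2, ← hS] at hcs
      rcases eq_or_lt_of_le hSnn with h0 | hpos
      · rw [← h0]; exact hTnn
      · nlinarith [hcs, hpos]
    have hsub : x ⬝ᵥ (Mp⁻¹ * Mp2 * Mp⁻¹ - M1⁻¹) *ᵥ x =
        x ⬝ᵥ (Mp⁻¹ * Mp2 * Mp⁻¹) *ᵥ x - x ⬝ᵥ M1⁻¹ *ᵥ x := by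
      rw [Matrix.sub_mulVec, dotProduct_sub]
    rw [star_x, hsub]
    linarith
end

section
/- With S_k(r) = Σ_{ξ_i>0} f(x_i) f(x_i)' ξ_i^{k(1−r/2)}, at r = 1 the sandwich matrix satisfies S_1(1)^{-1} S_0 S_1(1)^{-1} ⪰ A_ξ^{-1} ⪰ (N A)^{-1}, where S_0 = Σ_{ξ_i>0} f(x_i) f(x_i)' ξ_i and A_ξ = Σ_{ξ_i>0} f(x_i) f(x_i)'. Moreover, for the uniform design ξ_i ≡ 1/N both inequalities are equalities. -/
open Matrix Finset

private lemma sum_mulVec'_s8 {n m : Type*} [Fintype m] {ι : Type*} (s : Finset ι)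
    (M : ι → Matrix n m ℝ) (z : m → ℝ) :
    (∑ i ∈ s, M i) *ᵥ z = ∑ i ∈ s, M i *ᵥ z := by
  ext a
  simp only [mulVec, dotProduct, Matrix.sum_apply, Finset.sum_apply, Finset.sum_mul]
  exact Finset.sum_comm

private lemma dot_sum' {m : Type*} [Fintype m] {ι : Type*} (s : Finset ι)
    (x : m → ℝ) (w : ι → m → ℝ) :
    x ⬝ᵥ (∑ i ∈ s, w i) = ∑ i ∈ s, x ⬝ᵥ w i := by
  simp only [dotProduct, Finset.sum_apply, Finset.mul_sum]
  exact Finset.sum_comm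

private lemma vmv_mulVec {q : ℕ} (v z : Fin q → ℝ) :
    vecMulVec v v *ᵥ z = (v ⬝ᵥ z) • v := by
  ext a
  simp only [vecMulVec_apply, mulVec, dotProduct, Pi.smul_apply, smul_eq_mul, Finset.sum_mul]
  simp [Finset.mul_sum, mul_comm, mul_assoc, mul_left_comm]

private lemma quad {N q : ℕ} (f : Fin N → Fin q → ℝ) (s : Finset (Fin N)) (c : Fin N → ℝ)
    (x z : Fin q → ℝ) :
    x ⬝ᵥ (∑ i ∈ s, c i • vecMulVec (f i) (f i)) *ᵥ z
      = ∑ i ∈ s, c i * ((f i ⬝ᵥ x) * (f i ⬝ᵥ z)) := by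
  rw [sum_mulVec'_s8 s _ z, dot_sum']
  refine Finset.sum_congr rfl fun i _ => ?_
  rw [smul_mulVec, vmv_mulVec, dotProduct_smul, dotProduct_smul, smul_eq_mul, smul_eq_mul,
    dotProduct_comm x (f i)]
  ring

private lemma herm {N q : ℕ} (f : Fin N → Fin q → ℝ) (s : Finset (Fin N)) (c : Fin N → ℝ) :
    (∑ i ∈ s, c i • vecMulVec (f i) (f i)).IsHermitian := by
  unfold Matrix.IsHermitian
  ext a b
  simp [conjTranspose_apply, Matrix.sum_apply, vecMulVec_apply, mul_comm, mul_left_comm]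

private lemma herm1 {N q : ℕ} (f : Fin N → Fin q → ℝ) (s : Finset (Fin N)) :
    (∑ i ∈ s, vecMulVec (f i) (f i)).IsHermitian := by
  have := herm f s (fun _ => (1:ℝ))
  simpa using this

private lemma psd_sum {N q : ℕ} (f : Fin N → Fin q → ℝ) (t : Finset (Fin N)) :
    (∑ i ∈ t, vecMulVec (f i) (f i)).PosSemidef := by
  refine .of_dotProduct_mulVec_nonneg (herm1 f t) fun x => ?_
  rw [star_trivial]
  have h := quad f t (fun _ => (1:ℝ)) x x
  simp only [one_smul, one_mul] at h
  rw [h]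
  exact Finset.sum_nonneg fun i _ => mul_self_nonneg _

private lemma inv_antitone {q : ℕ} {B C : Matrix (Fin q) (Fin q) ℝ}
    (hC : C.PosSemidef) (hB : B.IsHermitian) (hCu : IsUnit C.det) (hBu : IsUnit B.det)
    (hBC : (B - C).PosSemidef) : (C⁻¹ - B⁻¹).PosSemidef := by
  have hCsymm : Cᵀ = C := by
    have := hC.isHermitian
    unfold Matrix.IsHermitian at this
    simpa using this
  apply PosSemidef.of_dotProduct_mulVec_nonneg
  · exact (hC.isHermitian.inv).sub hB.inv
  · intro x
    rw [star_trivial]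
    set y := B⁻¹ *ᵥ x with hy
    have hBy : B *ᵥ y = x := by
      rw [hy, mulVec_mulVec, Matrix.mul_nonsing_inv _ hBu, one_mulVec]
    have hCC : C *ᵥ (C⁻¹ *ᵥ x) = x := by
      rw [mulVec_mulVec, Matrix.mul_nonsing_inv _ hCu, one_mulVec]
    have hcross : y ⬝ᵥ C *ᵥ (C⁻¹ *ᵥ x) = x ⬝ᵥ y := by
      rw [hCC, dotProduct_comm]
    have hcross2 : (C⁻¹ *ᵥ x) ⬝ᵥ C *ᵥ y = x ⬝ᵥ y := by
      rw [dotProduct_mulVec, ← mulVec_transpose, hCsymm, hCC, dotProduct_comm]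
    have h1 : 0 ≤ (C⁻¹ *ᵥ x - y) ⬝ᵥ C *ᵥ (C⁻¹ *ᵥ x - y) := by
      have := hC.dotProduct_mulVec_nonneg (C⁻¹ *ᵥ x - y)
      rwa [star_trivial] at this
    simp only [mulVec_sub, sub_dotProduct, dotProduct_sub] at h1
    rw [hcross, hcross2, hCC] at h1
    have h2 : 0 ≤ y ⬝ᵥ B *ᵥ y - y ⬝ᵥ C *ᵥ y := by
      have := hBC.dotProduct_mulVec_nonneg y
      rw [star_trivial, sub_mulVec, dotProduct_sub] at this
      exact this
    have hBy2 : y ⬝ᵥ B *ᵥ y = x ⬝ᵥ y := by rw [hBy, dotProduct_comm]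
    have hxy : (C⁻¹ *ᵥ x) ⬝ᵥ x = x ⬝ᵥ C⁻¹ *ᵥ x := dotProduct_comm _ _
    rw [sub_mulVec, dotProduct_sub]
    rw [hBy2] at h2
    have hyy : x ⬝ᵥ B⁻¹ *ᵥ x = x ⬝ᵥ y := rfl
    rw [hyy]
    linarith

/-- With S_1(1), S_0, A_ξ the weighted Gram matrices of a design ξ on its
support, S_1(1)⁻¹ S_0 S_1(1)⁻¹ ⪰ A_ξ⁻¹ ⪰ (N A)⁻¹, with equalities for the uniform
design ξ_i ≡ 1/N. -/
theorem stmt8 {N q : ℕ} (f : Fin N → Fin q → ℝ) (ξ : Fin N → ℝ)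
    (hξ : ∀ i, 0 ≤ ξ i) (hsum : ∑ i, ξ i = 1)
    (S1 S0 Aξ A : Matrix (Fin q) (Fin q) ℝ)
    (hS1 : S1 = ∑ i ∈ univ.filter (fun i => 0 < ξ i), Real.sqrt (ξ i) • vecMulVec (f i) (f i))
    (hS0 : S0 = ∑ i ∈ univ.filter (fun i => 0 < ξ i), ξ i • vecMulVec (f i) (f i))
    (hAξ : Aξ = ∑ i ∈ univ.filter (fun i => 0 < ξ i), vecMulVec (f i) (f i))
    (hA : A = ((N : ℝ)⁻¹) • ∑ i, vecMulVec (f i) (f i))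
    (hS1inv : IsUnit S1.det) (hAξinv : IsUnit Aξ.det) (hAinv : IsUnit A.det) :
    (S1⁻¹ * S0 * S1⁻¹ - Aξ⁻¹).PosSemidef
      ∧ (Aξ⁻¹ - (((N : ℝ)) • A)⁻¹).PosSemidef
      ∧ ((∀ i, ξ i = 1 / (N : ℝ)) →
          S1⁻¹ * S0 * S1⁻¹ = Aξ⁻¹ ∧ Aξ⁻¹ = (((N : ℝ)) • A)⁻¹) := by
  have hN : N ≠ 0 := by
    rintro rfl
    simp at hsum
  have hN0 : (N : ℝ) ≠ 0 := Nat.cast_ne_zero.mpr hN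
  set s : Finset (Fin N) := univ.filter (fun i => 0 < ξ i) with hs
  -- hermitian facts
  have hS1h : S1.IsHermitian := by rw [hS1]; exact herm f s _
  have hS0h : S0.IsHermitian := by rw [hS0]; exact herm f s _
  have hAξh : Aξ.IsHermitian := by rw [hAξ]; exact herm1 f s
  have hAξ1 : Aξ = ∑ i ∈ s, (fun _ => (1:ℝ)) i • vecMulVec (f i) (f i) := by
    rw [hAξ]; simp
  -- Aξ is PSD
  have hAξpsd : Aξ.PosSemidef := by
    have := psd_sum f s
    rwa [← hAξ] at this
  -- key Schur-type inequality
  have hkey : (S0 - S1 * Aξ⁻¹ * S1).PosSemidef := by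
    have hmidh : (S1 * Aξ⁻¹ * S1).IsHermitian := by
      have h1 := Matrix.isHermitian_conjTranspose_mul_mul S1 hAξh.inv
      rwa [show S1ᴴ = S1 from hS1h] at h1
    refine .of_dotProduct_mulVec_nonneg (hS0h.sub hmidh) fun x => ?_
    rw [star_trivial]
    set y := Aξ⁻¹ *ᵥ (S1 *ᵥ x) with hy
    have e1 : (S1 * Aξ⁻¹ * S1) *ᵥ x = S1 *ᵥ y := by
      rw [hy, mulVec_mulVec, mulVec_mulVec]
    have hAy : Aξ *ᵥ y = S1 *ᵥ x := by
      rw [hy, mulVec_mulVec, Matrix.mul_nonsing_inv _ hAξinv, one_mulVec]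
    have qS0 : x ⬝ᵥ S0 *ᵥ x = ∑ i ∈ s, ξ i * ((f i ⬝ᵥ x) * (f i ⬝ᵥ x)) := by
      rw [hS0, quad]
    have qS1 : x ⬝ᵥ S1 *ᵥ y = ∑ i ∈ s, Real.sqrt (ξ i) * ((f i ⬝ᵥ x) * (f i ⬝ᵥ y)) := by
      rw [hS1, quad]
    have qS1' : y ⬝ᵥ S1 *ᵥ x = ∑ i ∈ s, Real.sqrt (ξ i) * ((f i ⬝ᵥ x) * (f i ⬝ᵥ y)) := by
      rw [hS1, quad]
      exact Finset.sum_congr rfl fun i _ => by ring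
    have qA : y ⬝ᵥ Aξ *ᵥ y = ∑ i ∈ s, (f i ⬝ᵥ y) * (f i ⬝ᵥ y) := by
      rw [hAξ1, quad]; simp
    have hmid : x ⬝ᵥ S1 *ᵥ y = y ⬝ᵥ Aξ *ᵥ y := by
      rw [hAy, qS1']
      rw [hS1, quad]
    have hpos : 0 ≤ ∑ i ∈ s, (Real.sqrt (ξ i) * (f i ⬝ᵥ x) - (f i ⬝ᵥ y))^2 :=
      Finset.sum_nonneg fun i _ => sq_nonneg _
    have hexp : ∑ i ∈ s, (Real.sqrt (ξ i) * (f i ⬝ᵥ x) - (f i ⬝ᵥ y))^2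
        = x ⬝ᵥ S0 *ᵥ x - 2 * (x ⬝ᵥ S1 *ᵥ y) + y ⬝ᵥ Aξ *ᵥ y := by
      rw [qS0, qS1, qA, Finset.mul_sum, ← Finset.sum_sub_distrib, ← Finset.sum_add_distrib]
      refine Finset.sum_congr rfl fun i _ => ?_
      linear_combination (f i ⬝ᵥ x * f i ⬝ᵥ x) * (Real.sq_sqrt (hξ i))
    rw [sub_mulVec, dotProduct_sub, e1]
    rw [hexp, hmid] at hpos
    linarith
  -- part 1
  have hS1invh : S1⁻¹ᴴ = S1⁻¹ := hS1h.inv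
  have part1 : (S1⁻¹ * S0 * S1⁻¹ - Aξ⁻¹).PosSemidef := by
    have heq : S1⁻¹ * S0 * S1⁻¹ - Aξ⁻¹ = S1⁻¹ᴴ * (S0 - S1 * Aξ⁻¹ * S1) * S1⁻¹ := by
      rw [hS1invh, Matrix.mul_sub, Matrix.sub_mul]
      congr 1
      symm
      calc S1⁻¹ * (S1 * Aξ⁻¹ * S1) * S1⁻¹
          = (S1⁻¹ * S1) * Aξ⁻¹ * (S1 * S1⁻¹) := by simp only [Matrix.mul_assoc]
        _ = Aξ⁻¹ := by
            rw [Matrix.nonsing_inv_mul _ hS1inv, Matrix.mul_nonsing_inv _ hS1inv,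
              Matrix.one_mul, Matrix.mul_one]
    rw [heq]
    exact hkey.conjTranspose_mul_mul_same S1⁻¹
  -- part 2
  have hNA : (N : ℝ) • A = ∑ i, vecMulVec (f i) (f i) := by
    rw [hA, smul_smul, mul_inv_cancel₀ hN0, one_smul]
  have hNAh : ((N : ℝ) • A).IsHermitian := by rw [hNA]; exact herm1 f univ
  have hNAu : IsUnit ((N : ℝ) • A).det := by
    rw [Matrix.det_smul]
    exact (IsUnit.pow _ (isUnit_iff_ne_zero.mpr hN0)).mul hAinv
  have hdiff : ((N : ℝ) • A - Aξ).PosSemidef := by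
    have hsplit : (N : ℝ) • A - Aξ
        = ∑ i ∈ univ.filter (fun i => ¬ 0 < ξ i), vecMulVec (f i) (f i) := by
      rw [hNA, hAξ, hs, sub_eq_iff_eq_add, add_comm]
      exact (Finset.sum_filter_add_sum_filter_not univ _ _).symm
    rw [hsplit]
    exact psd_sum f _
  have part2 : (Aξ⁻¹ - ((N : ℝ) • A)⁻¹).PosSemidef :=
    inv_antitone hAξpsd hNAh hAξinv hNAu hdiff
  refine ⟨part1, part2, fun hu => ?_⟩
  -- uniform case
  have hpos : ∀ i : Fin N, 0 < ξ i := fun i => by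
    rw [hu i]; positivity
  have hsuniv : s = univ := by
    rw [hs]; exact Finset.filter_true_of_mem fun i _ => hpos i
  set G : Matrix (Fin q) (Fin q) ℝ := ∑ i, vecMulVec (f i) (f i) with hG
  have hAξG : Aξ = G := by rw [hAξ, hsuniv, hG]
  have hNAG : (N : ℝ) • A = G := hNA
  have hGu : IsUnit G.det := hAξG ▸ hAξinv
  have hc : Real.sqrt ((N:ℝ)⁻¹) * Real.sqrt ((N:ℝ)⁻¹) = (N:ℝ)⁻¹ :=
    Real.mul_self_sqrt (by positivity)
  have hS1G : S1 = Real.sqrt ((N:ℝ)⁻¹) • G := by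
    rw [hS1, hsuniv, hG, Finset.smul_sum]
    exact Finset.sum_congr rfl fun i _ => by rw [hu i, one_div]
  have hS0G : S0 = (N:ℝ)⁻¹ • G := by
    rw [hS0, hsuniv, hG, Finset.smul_sum]
    exact Finset.sum_congr rfl fun i _ => by rw [hu i, one_div]
  have hmidu : S1 * Aξ⁻¹ * S1 = S0 := by
    rw [hS1G, hS0G, hAξG, smul_mul_assoc, smul_mul_assoc, mul_smul_comm, smul_smul, hc,
      Matrix.mul_nonsing_inv _ hGu, Matrix.one_mul]
  constructor
  · calc S1⁻¹ * S0 * S1⁻¹ = S1⁻¹ * (S1 * Aξ⁻¹ * S1) * S1⁻¹ := by rw [hmidu]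
      _ = (S1⁻¹ * S1) * Aξ⁻¹ * (S1 * S1⁻¹) := by simp only [Matrix.mul_assoc]
      _ = Aξ⁻¹ := by
          rw [Matrix.nonsing_inv_mul _ hS1inv, Matrix.mul_nonsing_inv _ hS1inv,
            Matrix.one_mul, Matrix.mul_one]
  · rw [hAξG, hNAG]
end
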